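/- (Positive definiteness of the Lyapunov matrix P.) Let L₂ ≥ 0, and let k_p, k_d, k_i, L₁ satisfy k_p − L₁ > 0, k_d − L₂ > 0, k_i > 0 and (k_p − L₁)(k_d − L₂) − k_i > L₂ √(k_i (k_d − L₂)). Set μ = 2((k_p − L₁)(k_d − L₂) + k_i)/(4(k_p − L₁) + L₂²) and let δ satisfy 0 < δ < 2μk_i/((k_p − L₁) + μ k_d). Then the symmetric 3×3 matrix P = (1/2) [[μ k_i, k_i, δ], [k_i, k_p − L₁ + μ k_d, μ], [δ, μ, 1]] is positive definite. -/

import Mathlib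

set_option maxHeartbeats 1600000 in
/-- **Positive definiteness of the Lyapunov matrix `P`.**
Under `k_p − L₁ > 0`, `k_d − L₂ > 0`, `k_i > 0`, `L₂ ≥ 0` and
`(k_p − L₁)(k_d − L₂) − k_i > L₂ √(k_i (k_d − L₂))`, with
`μ = 2((k_p − L₁)(k_d − L₂) + k_i)/(4(k_p − L₁) + L₂²)` and
`0 < δ < 2μk_i/((k_p − L₁) + μ k_d)`, the matrix
`P = (1/2) [[μk_i, k_i, δ], [k_i, k_p − L₁ + μk_d, μ], [δ, μ, 1]]` is positive definite. -/
theorem lyapunov_matrix_P_posdef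
    (kp kd ki L1 L2 μ δ : ℝ)
    (hL2 : 0 ≤ L2)
    (h1 : 0 < kp - L1) (h2 : 0 < kd - L2) (h3 : 0 < ki)
    (h4 : (kp - L1) * (kd - L2) - ki > L2 * Real.sqrt (ki * (kd - L2)))
    (hμ : μ = 2 * ((kp - L1) * (kd - L2) + ki) / (4 * (kp - L1) + L2 ^ 2))
    (hδ1 : 0 < δ) (hδ2 : δ < 2 * μ * ki / ((kp - L1) + μ * kd)) :
    ((1 / 2 : ℝ) • !![μ * ki, ki, δ;
                      ki, kp - L1 + μ * kd, μ;
                      δ, μ, 1]).PosDef := by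
  -- abbreviations (in comments): a = kp - L1, b = kd - L2, L = L2,
  -- s = a*b + ki, d = 4*a + L2^2, e = a*b - ki, c = a + μ*kd
  have h0 : 0 ≤ L2 * Real.sqrt (ki * (kd - L2)) :=
    mul_nonneg hL2 (Real.sqrt_nonneg _)
  have he : 0 < (kp - L1) * (kd - L2) - ki := h0.trans_lt h4
  have hsq : L2 ^ 2 * (ki * (kd - L2)) < ((kp - L1) * (kd - L2) - ki) ^ 2 := by
    have hmm := mul_self_lt_mul_self h0 h4
    have ht : Real.sqrt (ki * (kd - L2)) * Real.sqrt (ki * (kd - L2))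
        = ki * (kd - L2) := Real.mul_self_sqrt (by positivity)
    nlinarith [hmm, ht]
  have hd : (0:ℝ) < 4 * (kp - L1) + L2 ^ 2 := by positivity
  have hμpos : 0 < μ := by
    rw [hμ]; exact div_pos (by nlinarith) hd
  have hμ' : μ * (4 * (kp - L1) + L2 ^ 2) = 2 * ((kp - L1) * (kd - L2) + ki) := by
    rw [hμ]; field_simp
  -- Step: 2*a*e - ki*L2^2 > 0
  have h2ae : 0 < 2 * (kp - L1) * ((kp - L1) * (kd - L2) - ki) - ki * L2 ^ 2 := by
    nlinarith [hsq, mul_pos he (by nlinarith : (0:ℝ) < (kp - L1) * (kd - L2) + ki), h2]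
  -- Step: μ < kd - L2
  have hμb : μ < kd - L2 := by
    rw [hμ, div_lt_iff₀ hd]
    nlinarith [he, mul_nonneg (sq_nonneg L2) h2.le]
  -- Key inequality: ki ≤ μ*a + μ^2*L2
  have key : ki ≤ μ * (kp - L1) + μ ^ 2 * L2 := by
    have hexp : (μ * (kp - L1) + μ ^ 2 * L2 - ki) * (4 * (kp - L1) + L2 ^ 2) ^ 2
        = 2 * ((kp - L1) * (kd - L2) + ki) * (kp - L1) * (4 * (kp - L1) + L2 ^ 2)
          + 4 * ((kp - L1) * (kd - L2) + ki) ^ 2 * L2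
          - ki * (4 * (kp - L1) + L2 ^ 2) ^ 2 := by
      linear_combination ((kp - L1) * (4 * (kp - L1) + L2 ^ 2)
        + L2 * (μ * (4 * (kp - L1) + L2 ^ 2) + 2 * ((kp - L1) * (kd - L2) + ki))) * hμ'
    have hG : 0 ≤ 2 * ((kp - L1) * (kd - L2) + ki) * (kp - L1) * (4 * (kp - L1) + L2 ^ 2)
          + 4 * ((kp - L1) * (kd - L2) + ki) ^ 2 * L2
          - ki * (4 * (kp - L1) + L2 ^ 2) ^ 2 := by
      nlinarith [mul_pos hd h2ae, mul_nonneg hL2 (sq_nonneg ((kp - L1) * (kd - L2) + ki))]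
    nlinarith [hexp, hG, sq_nonneg (4 * (kp - L1) + L2 ^ 2), hd, mul_pos hd hd]
  -- key2 : ki ≤ μ*(c - μ^2)
  have key2 : ki ≤ μ * ((kp - L1) + μ * kd) - μ ^ 3 := by
    nlinarith [key, mul_pos (mul_pos hμpos hμpos) (sub_pos.mpr hμb)]
  have hkd : 0 < kd := by linarith
  have hcpos : 0 < (kp - L1) + μ * kd := by nlinarith [mul_pos hμpos hkd]
  have hcμ : 0 < (kp - L1) + μ * kd - μ ^ 2 := by nlinarith [key2, h3, hμpos]
  have hδ2' : δ * ((kp - L1) + μ * kd) < 2 * μ * ki := (lt_div_iff₀ hcpos).mp hδ2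
  -- determinant (Schur complement) positivity
  have hdet : 0 < μ * ki * ((kp - L1) + μ * kd) - μ ^ 3 * ki - ki ^ 2
      + 2 * μ * ki * δ - δ ^ 2 * ((kp - L1) + μ * kd) := by
    nlinarith [mul_nonneg h3.le (sub_nonneg.mpr key2),
      mul_pos hδ1 (sub_pos.mpr hδ2')]
  have hA : 0 < μ * ki - δ ^ 2 := by
    nlinarith [hdet, sq_nonneg (ki - δ * μ), hcμ]
  rw [Matrix.posDef_iff_dotProduct_mulVec]
  constructor
  · ext i j
    fin_cases i <;> fin_cases j <;>
      simp [Matrix.conjTranspose_apply, Matrix.smul_apply]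
  · intro x hx
    have hx3 : x 0 ≠ 0 ∨ x 1 ≠ 0 ∨ x 2 ≠ 0 := by
      by_contra h
      push_neg at h
      exact hx (funext fun i => by fin_cases i <;> simp [h.1, h.2.1, h.2.2])
    simp [Matrix.mulVec, dotProduct, Fin.sum_univ_three, Matrix.smul_apply]
    set u := x 0 with hu
    set v := x 1 with hv
    set w := x 2 with hw
    rcases hx3 with hu0 | h
    · by_cases hv0 : v = 0
      · rw [hv0]
        nlinarith [mul_pos hA (mul_self_pos.mpr hu0), sq_nonneg (w + δ * u), hA]
      · nlinarith [sq_nonneg ((μ * ki - δ ^ 2) * u + (ki - δ * μ) * v),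
          mul_pos hdet (mul_self_pos.mpr hv0), hA,
          mul_nonneg hA.le (sq_nonneg (w + δ * u + μ * v))]
    · rcases h with hv0 | hw0
      · nlinarith [sq_nonneg ((μ * ki - δ ^ 2) * u + (ki - δ * μ) * v),
          mul_pos hdet (mul_self_pos.mpr hv0), hA,
          mul_nonneg hA.le (sq_nonneg (w + δ * u + μ * v))]
      · by_cases hv0 : v = 0
        · by_cases hu0 : u = 0
          · rw [hu0, hv0]
            nlinarith [mul_self_pos.mpr hw0]
          · rw [hv0]
            nlinarith [mul_pos hA (mul_self_pos.mpr hu0),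
              sq_nonneg (w + δ * u), hA]
        · nlinarith [sq_nonneg ((μ * ki - δ ^ 2) * u + (ki - δ * μ) * v),
            mul_pos hdet (mul_self_pos.mpr hv0), hA,
            mul_nonneg hA.le (sq_nonneg (w + δ * u + μ * v))]
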